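/- Let X, Y be Banach spaces, F : X → Y continuous and Gâteaux-differentiable with F(0) = 0. Assume for every x with ‖x‖ ≤ R the derivative DF(x) has a right inverse L(x) : Y → X (i.e. DF(x) L(x) v = v for all v ∈ Y) with operator norm ‖L(x)‖ ≤ m. Then for every ȳ with ‖ȳ‖ < R/m and every μ > m there exists x̄ with ‖x̄‖ < R, ‖x̄‖ ≤ μ‖ȳ‖, and F(x̄) = ȳ. -/

import Mathlib

open Filter Topology

theorem ekeland_aux {X : Type*} [MetricSpace X] [CompleteSpace X]
    (f : X → ℝ) (hf : Continuous f) (hf0 : ∀ x, 0 ≤ f x)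
    (α : ℝ) (hα : 0 < α) (x0 : X) :
    ∃ z : X, α * dist z x0 ≤ f x0 - f z ∧ ∀ w, f z ≤ f w + α * dist w z := by
  set S : X → Set X := fun y => {x | f x + α * dist x y ≤ f y} with hS
  have hmem : ∀ y, y ∈ S y := by intro y; simp [hS]
  have htrans : ∀ {x y w : X}, x ∈ S y → y ∈ S w → x ∈ S w := by
    intro x y w hx hy
    simp only [hS, Set.mem_setOf_eq] at *
    have h1 := dist_triangle x y w
    nlinarith
  have hstep : ∀ (y : X) (n : ℕ), ∃ x', x' ∈ S y ∧ ∀ w ∈ S y, f x' ≤ f w + (1/2 : ℝ)^n := by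
    intro y n
    have hne : (f '' S y).Nonempty := ⟨f y, y, hmem y, rfl⟩
    have hbdd : BddBelow (f '' S y) := ⟨0, by rintro a ⟨w, -, rfl⟩; exact hf0 w⟩
    obtain ⟨a, ⟨w, hw, rfl⟩, ha⟩ := exists_lt_of_csInf_lt hne
      (lt_add_of_pos_right (sInf (f '' S y)) (by positivity : (0:ℝ) < (1/2:ℝ)^n))
    refine ⟨w, hw, fun w' hw' => ?_⟩
    have h2 := csInf_le hbdd ⟨w', hw', rfl⟩
    linarith
  choose g hg1 hg2 using hstep
  let x : ℕ → X := fun n => Nat.rec x0 (fun n xn => g xn n) n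
  have hxs : ∀ n, x (n+1) = g (x n) n := fun n => rfl
  have h1 : ∀ n, x (n+1) ∈ S (x n) := fun n => by rw [hxs]; exact hg1 (x n) n
  have h2 : ∀ n, ∀ w ∈ S (x n), f (x (n+1)) ≤ f w + (1/2:ℝ)^n := fun n => by
    rw [hxs]; exact hg2 (x n) n
  have hchain : ∀ n k, x (n + k) ∈ S (x n) := by
    intro n k
    induction k with
    | zero => exact hmem (x n)
    | succ k ih => exact htrans (h1 (n + k)) ih
  have hanti : Antitone (fun n => f (x n)) := by
    apply antitone_nat_of_succ_le
    intro n
    have := h1 n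
    simp only [hS, Set.mem_setOf_eq] at this
    nlinarith [dist_nonneg (x := x (n+1)) (y := x n)]
  have hbdd : BddBelow (Set.range fun n => f (x n)) := ⟨0, by rintro a ⟨n, rfl⟩; exact hf0 _⟩
  set l : ℝ := ⨅ n, f (x n) with hl
  have hlim : Tendsto (fun n => f (x n)) atTop (𝓝 l) := tendsto_atTop_ciInf hanti hbdd
  have hl_le : ∀ n, l ≤ f (x n) := fun n => ciInf_le hbdd n
  have hdist : ∀ n k, α * dist (x (n+k)) (x n) ≤ f (x n) - f (x (n+k)) := by
    intro n k
    have := hchain n k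
    simp only [hS, Set.mem_setOf_eq] at this
    linarith
  have hcauchy : CauchySeq x := by
    apply cauchySeq_of_le_tendsto_0 (fun N => (f (x N) - l) / α)
    · intro n m' N hn hm
      rcases le_total n m' with h | h
      · obtain ⟨k, rfl⟩ := Nat.exists_eq_add_of_le h
        have hd := hdist n k
        have := hl_le (n + k)
        have hfn : f (x n) ≤ f (x N) := hanti hn
        rw [dist_comm]
        rw [le_div_iff₀ hα, mul_comm]
        linarith
      · obtain ⟨k, rfl⟩ := Nat.exists_eq_add_of_le h
        have hd := hdist m' k
        have := hl_le (m' + k)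
        have hfn : f (x m') ≤ f (x N) := hanti hm
        rw [le_div_iff₀ hα, mul_comm]
        linarith
    · have : Tendsto (fun N => f (x N) - l) atTop (𝓝 (l - l)) := hlim.sub tendsto_const_nhds
      simpa using this.div_const α
  obtain ⟨z, hz⟩ := cauchySeq_tendsto_of_complete hcauchy
  have hclosed : ∀ y, IsClosed (S y) := by
    intro y
    apply isClosed_le _ continuous_const
    exact hf.add (continuous_const.mul ((continuous_id.dist continuous_const)))
  have hzS : ∀ n, z ∈ S (x n) := by
    intro n
    have htd : Tendsto (fun k => x (k + n)) atTop (𝓝 z) :=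
      hz.comp (tendsto_add_atTop_nat n)
    refine (hclosed (x n)).mem_of_tendsto htd (Eventually.of_forall fun k => ?_)
    have := hchain n k
    rwa [Nat.add_comm] at this
  have hfz_le_l : f z ≤ l := by
    apply le_ciInf
    intro n
    have := hzS n
    simp only [hS, Set.mem_setOf_eq] at this
    nlinarith [dist_nonneg (x := z) (y := x n)]
  refine ⟨z, ?_, ?_⟩
  · have := hzS 0
    simp only [hS, Set.mem_setOf_eq] at this
    have hx0 : x 0 = x0 := rfl
    rw [hx0] at this
    linarith
  · intro w
    by_contra hcon
    push_neg at hcon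
    have hwSz : w ∈ S z := by simp only [hS, Set.mem_setOf_eq]; linarith
    have hwSn : ∀ n, w ∈ S (x n) := fun n => htrans hwSz (hzS n)
    have hl_le_fw : l ≤ f w := by
      have hle : ∀ n, f (x (n+1)) ≤ f w + (1/2:ℝ)^n := fun n => h2 n w (hwSn n)
      have hlim' : Tendsto (fun n => f (x (n+1))) atTop (𝓝 l) :=
        hlim.comp (tendsto_add_atTop_nat 1)
      have hlim2 : Tendsto (fun n : ℕ => f w + (1/2:ℝ)^n) atTop (𝓝 (f w + 0)) :=
        tendsto_const_nhds.add (tendsto_pow_atTop_nhds_zero_of_lt_one (by norm_num) (by norm_num))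
      have := le_of_tendsto_of_tendsto' hlim' hlim2 hle
      simpa using this
    have hd : 0 ≤ α * dist w z := mul_nonneg hα.le dist_nonneg
    linarith

/-- Inverse function theorem in Banach spaces via Ekeland's variational principle. -/
theorem stmt2 (X Y : Type*) [NormedAddCommGroup X] [NormedSpace ℝ X] [CompleteSpace X]
    [NormedAddCommGroup Y] [NormedSpace ℝ Y] [CompleteSpace Y]
    (F : X → Y) (DF : X → X →L[ℝ] Y) (L : X → Y →L[ℝ] X)
    (R m : ℝ) (hR : 0 < R) (hm : 0 < m)
    (hF0 : F 0 = 0) (hFc : Continuous F)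
    (hDF : ∀ x u : X,
      Tendsto (fun t : ℝ => t⁻¹ • (F (x + t • u) - F x)) (𝓝[≠] 0) (𝓝 (DF x u)))
    (hLinv : ∀ x : X, ‖x‖ ≤ R → ∀ v : Y, DF x (L x v) = v)
    (hLbound : ∀ x : X, ‖x‖ ≤ R → ‖L x‖ ≤ m)
    (ybar : Y) (hy : ‖ybar‖ < R / m) (μ : ℝ) (hμ : m < μ) :
    ∃ xbar : X, ‖xbar‖ < R ∧ ‖xbar‖ ≤ μ * ‖ybar‖ ∧ F xbar = ybar := by
  rcases eq_or_ne ybar 0 with rfl | hy0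
  · exact ⟨0, by simpa using hR, by simp, by simpa using hF0⟩
  have hyn : 0 < ‖ybar‖ := norm_pos_iff.mpr hy0
  have hmy : m * ‖ybar‖ < R := by
    rw [lt_div_iff₀ hm] at hy; linarith [hy]
  set μ' : ℝ := min μ ((m + R / ‖ybar‖) / 2) with hμ'def
  have hmRy : m < R / ‖ybar‖ := (lt_div_iff₀ hyn).mpr (by linarith [hmy])
  have hμ'm : m < μ' := lt_min hμ (by linarith)
  have hμ'μ : μ' ≤ μ := min_le_left _ _
  have hμ'pos : 0 < μ' := hm.trans hμ'm
  have hμ'R : μ' * ‖ybar‖ < R := by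
    have h1 : μ' ≤ (m + R / ‖ybar‖) / 2 := min_le_right _ _
    have h2 : (m + R / ‖ybar‖) / 2 < R / ‖ybar‖ := by linarith
    have := mul_lt_mul_of_pos_right (h1.trans_lt h2) hyn
    rwa [div_mul_cancel₀ _ hyn.ne'] at this
  -- apply Ekeland
  set f : X → ℝ := fun x => ‖F x - ybar‖ with hfdef
  have hfc : Continuous f := (hFc.sub continuous_const).norm
  have hf0 : ∀ x, 0 ≤ f x := fun x => norm_nonneg _
  obtain ⟨z, hz1, hz2⟩ := ekeland_aux f hfc hf0 (1/μ') (by positivity) 0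
  have hfx0 : f 0 = ‖ybar‖ := by simp [hfdef, hF0]
  rw [hfx0] at hz1
  rw [dist_zero_right] at hz1
  have hznorm : ‖z‖ ≤ μ' * (‖ybar‖ - f z) := by
    rw [div_mul_eq_mul_div, one_mul, div_le_iff₀ hμ'pos] at hz1
    linarith [hz1, mul_comm (‖ybar‖ - f z) μ']
  have hzμy : ‖z‖ ≤ μ' * ‖ybar‖ := by nlinarith [hf0 z, hμ'pos]
  have hzR : ‖z‖ < R := lt_of_le_of_lt hzμy hμ'R
  refine ⟨z, hzR, hzμy.trans (by nlinarith [hyn]), ?_⟩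
  by_contra hne
  set v : Y := ybar - F z with hvdef
  have hv : 0 < ‖v‖ := norm_pos_iff.mpr (sub_ne_zero.mpr (Ne.symm hne))
  set u : X := L z v with hudef
  have hzR' : ‖z‖ ≤ R := hzR.le
  have hu : ‖u‖ ≤ m * ‖v‖ := by
    calc ‖u‖ ≤ ‖L z‖ * ‖v‖ := (L z).le_opNorm v
    _ ≤ m * ‖v‖ := mul_le_mul_of_nonneg_right (hLbound z hzR') (norm_nonneg v)
  have hDFu : DF z u = v := hLinv z hzR' v
  set c : ℝ := (1 - m / μ') * ‖v‖ with hcdef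
  have hc : 0 < c := by
    have : m / μ' < 1 := (div_lt_one hμ'pos).mpr hμ'm
    have h1 : 0 < 1 - m / μ' := by linarith
    positivity
  have hT : Tendsto (fun t : ℝ => t⁻¹ • (F (z + t • u) - F z)) (𝓝[>] 0) (𝓝 v) := by
    have := hDF z u
    rw [hDFu] at this
    exact this.mono_left (nhdsWithin_mono 0 fun t ht => ne_of_gt ht)
  have hev : ∀ᶠ t in 𝓝[>] (0:ℝ),
      dist (t⁻¹ • (F (z + t • u) - F z)) v < c := by
    have := Metric.tendsto_nhds.mp hT c hc
    exact this
  have hIoo : ∀ᶠ t in 𝓝[>] (0:ℝ), t ∈ Set.Ioo (0:ℝ) 1 :=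
    Ioo_mem_nhdsGT_of_mem ⟨le_refl 0, one_pos⟩
  obtain ⟨t, htd, ht0, ht1⟩ := (hev.and hIoo).exists
  set e : Y := t⁻¹ • (F (z + t • u) - F z) - v with hedef
  have he : ‖e‖ < c := by rw [hedef, ← dist_eq_norm]; exact htd
  have ht0' : t ≠ 0 := ne_of_gt ht0
  have hFt : F (z + t • u) - F z = t • v + t • e := by
    calc F (z + t • u) - F z = t • (t⁻¹ • (F (z + t • u) - F z)) :=
          (smul_inv_smul₀ ht0' _).symm
    _ = t • v + t • e := by rw [hedef]; module
  have hkey : f (z + t • u) ≤ (1 - t) * ‖v‖ + t * ‖e‖ := by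
    have : F (z + t • u) - ybar = (t - 1) • v + t • e := by
      have : F (z + t • u) - ybar = (F (z + t • u) - F z) + (F z - ybar) := by abel
      rw [this, hFt, hvdef]
      module
    rw [hfdef]
    simp only []
    rw [this]
    calc ‖(t - 1) • v + t • e‖ ≤ ‖(t - 1) • v‖ + ‖t • e‖ := norm_add_le _ _
    _ = |t - 1| * ‖v‖ + |t| * ‖e‖ := by rw [norm_smul, norm_smul, Real.norm_eq_abs, Real.norm_eq_abs]
    _ = (1 - t) * ‖v‖ + t * ‖e‖ := by
        rw [abs_of_nonpos (by linarith : t - 1 ≤ 0), abs_of_pos ht0]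
        ring
  have hfz : f z = ‖v‖ := by
    rw [hfdef]
    simp only []
    rw [← norm_neg]
    congr 1
    rw [hvdef]
    abel
  have hek := hz2 (z + t • u)
  rw [hfz, dist_eq_norm] at hek
  have hdist : ‖z + t • u - z‖ = t * ‖u‖ := by
    rw [add_sub_cancel_left, norm_smul, Real.norm_eq_abs, abs_of_pos ht0]
  rw [hdist] at hek
  have hμ'inv : 1 / μ' * (t * ‖u‖) ≤ t * (m / μ') * ‖v‖ := by
    have h1 : t * ‖u‖ ≤ t * (m * ‖v‖) := mul_le_mul_of_nonneg_left hu ht0.le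
    calc 1 / μ' * (t * ‖u‖) ≤ 1 / μ' * (t * (m * ‖v‖)) :=
          mul_le_mul_of_nonneg_left h1 (by positivity)
    _ = t * (m / μ') * ‖v‖ := by field_simp
  have hfinal : ‖v‖ ≤ (1 - t) * ‖v‖ + t * ‖e‖ + t * (m / μ') * ‖v‖ := by
    linarith [hek, hkey, hμ'inv]
  have : c ≤ ‖e‖ := by
    rw [hcdef]
    have ht0' : 0 < t := ht0
    nlinarith [hfinal]
  linarith [he, this]
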